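/- Let R be a commutative ring, let f : E ⟶ F be a morphism of ℤ-indexed cochain complexes of R-modules, and let n be a natural number. Define the chain map g_n : E^{⊕n} ⟶ F^{⊕(n+1)} whose j-th component (0 ≤ j ≤ n) on the summands is f(x_{j+1}) − f(x_j), with the convention x_0 = x_{n+1} = 0 (each summand E contributes +f in one slot of F^{⊕(n+1)} and −f in the next). Then the mapping cone of g_n is isomorphic, in the homotopy category of cochain complexes of R-modules, to F ⊕ Cone(f)^{⊕n}, the biproduct of F with n copies of the mapping cone of f. -/

import Mathlib

open CategoryTheory CategoryTheory.Limits

attribute [local instance] CategoryTheory.Abelian.hasFiniteBiproducts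
open CochainComplex CochainComplex.HomComplex

section Helpers

variable {R : Type*} [CommRing R] {K L M : CochainComplex (ModuleCat R) ℤ}

lemma cochain_sum_v {ι : Type*} (s : Finset ι) {m : ℤ} (γ : ι → Cochain K L m)
    (p q : ℤ) (hpq : p + m = q) :
    (∑ i ∈ s, γ i).v p q hpq = ∑ i ∈ s, (γ i).v p q hpq := by
  classical
  induction s using Finset.induction with
  | empty => simp
  | insert _ _ h ih => rw [Finset.sum_insert h, Finset.sum_insert h, Cochain.add_v, ih]

lemma cochain_ofHom_sum {ι : Type*} (s : Finset ι) (φ : ι → (K ⟶ L)) :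
    Cochain.ofHom (∑ i ∈ s, φ i) = ∑ i ∈ s, Cochain.ofHom (φ i) := by
  classical
  induction s using Finset.induction with
  | empty => simp
  | insert _ _ h ih => rw [Finset.sum_insert h, Finset.sum_insert h, Cochain.ofHom_add, ih]

lemma cochain_sum_comp {ι : Type*} (s : Finset ι) {m m' mm : ℤ} (γ : ι → Cochain K L m)
    (δ' : Cochain L M m') (h : m + m' = mm) :
    (∑ i ∈ s, γ i).comp δ' h = ∑ i ∈ s, (γ i).comp δ' h := by
  classical
  induction s using Finset.induction with
  | empty => simp
  | insert _ _ hh ih => rw [Finset.sum_insert hh, Finset.sum_insert hh, Cochain.add_comp, ih]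

lemma cochain_comp_sum {ι : Type*} (s : Finset ι) {m m' mm : ℤ} (γ : Cochain K L m)
    (δ' : ι → Cochain L M m') (h : m + m' = mm) :
    γ.comp (∑ i ∈ s, δ' i) h = ∑ i ∈ s, γ.comp (δ' i) h := by
  classical
  induction s using Finset.induction with
  | empty => simp
  | insert _ _ hh ih => rw [Finset.sum_insert hh, Finset.sum_insert hh, Cochain.comp_add, ih]

lemma delta_sum {ι : Type*} (s : Finset ι) {m m' : ℤ} (γ : ι → Cochain K L m) :
    δ m m' (∑ i ∈ s, γ i) = ∑ i ∈ s, δ m m' (γ i) := by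
  classical
  induction s using Finset.induction with
  | empty => simp
  | insert _ _ hh ih => rw [Finset.sum_insert hh, Finset.sum_insert hh, δ_add, ih]

lemma tele_sum {M : Type*} [AddCommGroup M] (u : ℕ → M) (m : ℕ) :
    ∑ i : Fin m, (u ((i : ℕ) + 1) - u (i : ℕ)) = u m - u 0 := by
  rw [Fin.sum_univ_eq_sum_range (fun i => u (i + 1) - u i) m]
  exact Finset.sum_range_sub u m

lemma tele_sum_le {M : Type*} [AddCommGroup M] (u : ℕ → M) (m c : ℕ) (hc : c < m) :
    ∑ i : Fin m, (if (i : ℕ) ≤ c then u ((i : ℕ) + 1) - u (i : ℕ) else 0) = u (c + 1) - u 0 := by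
  rw [Fin.sum_univ_eq_sum_range (fun i => if i ≤ c then u (i + 1) - u i else 0) m,
    ← Finset.sum_filter]
  have he : (Finset.range m).filter (fun i => i ≤ c) = Finset.range (c + 1) := by
    ext i
    simp only [Finset.mem_filter, Finset.mem_range]
    omega
  rw [he]
  exact Finset.sum_range_sub u (c + 1)

lemma tele_sum_ge {M : Type*} [AddCommGroup M] (u : ℕ → M) (m c : ℕ) (hc : c ≤ m) :
    ∑ j : Fin m, (if c ≤ (j : ℕ) then u (j : ℕ) - u ((j : ℕ) + 1) else 0) = u c - u m := by
  rw [Fin.sum_univ_eq_sum_range (fun j => if c ≤ j then u j - u (j + 1) else 0) m,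
    ← Finset.sum_filter]
  have he : (Finset.range m).filter (fun j => c ≤ j) = Finset.Ico c m := by
    ext j
    simp only [Finset.mem_filter, Finset.mem_range, Finset.mem_Ico]
    omega
  rw [he, Finset.sum_Ico_eq_sub _ hc, Finset.sum_range_sub' u, Finset.sum_range_sub' u]
  abel

lemma bi_ι_π {J : Type} [Fintype J] [DecidableEq J] (X : CochainComplex (ModuleCat R) ℤ)
    (j k : J) :
    biproduct.ι (fun _ : J => X) j ≫ biproduct.π (fun _ : J => X) k =
      if j = k then 𝟙 X else 0 := by
  rw [biproduct.ι_π]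
  by_cases h : j = k
  · subst h; simp
  · simp [h]

end Helpers


section Defs
variable {R : Type*} [CommRing R] {E F : CochainComplex (ModuleCat R) ℤ} (f : E ⟶ F) (n : ℕ)

/-- the 1-based projections -/
noncomputable def qq (n : ℕ) (i : ℕ) : (⨁ fun _ : Fin n => E) ⟶ E :=
  if h : 1 ≤ i ∧ i ≤ n then biproduct.π (fun _ : Fin n => E) ⟨i - 1, (by omega : i - 1 < n + 0)⟩ else 0

noncomputable def Gmap : (⨁ fun _ : Fin n => E) ⟶ (⨁ fun _ : Fin (n + 1) => F) :=
  biproduct.lift fun j : Fin (n + 1) => qq n ((j : ℕ) + 1) ≫ f - qq n (j : ℕ) ≫ f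

noncomputable def ιB (k : ℕ) : F ⟶ ⨁ fun _ : Fin (n + 1) => F :=
  if h : k ≤ n then biproduct.ι (fun _ : Fin (n + 1) => F) ⟨k, by omega⟩ else 0

noncomputable def sθ (i : ℕ) : F ⟶ ⨁ fun _ : Fin n => mappingCone f :=
  ∑ j : Fin n, if i ≤ (j : ℕ) then
    mappingCone.inr f ≫ biproduct.ι (fun _ : Fin n => mappingCone f) j else 0

noncomputable def βmap :
    (⨁ fun _ : Fin (n + 1) => F) ⟶ F ⊞ ⨁ fun _ : Fin n => mappingCone f :=
  biproduct.desc fun i : Fin (n + 1) => biprod.lift (𝟙 F) (sθ f n (i : ℕ))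

noncomputable def αc :
    Cochain (⨁ fun _ : Fin n => E) (F ⊞ ⨁ fun _ : Fin n => mappingCone f) (-1) :=
  ∑ j : Fin n, (Cochain.ofHom (biproduct.π (fun _ : Fin n => E) j)).comp
    ((mappingCone.inl f).comp
      (Cochain.ofHom (biproduct.ι (fun _ : Fin n => mappingCone f) j ≫ biprod.inr))
      (add_zero (-1))) (zero_add (-1))

lemma qq_succ (j : Fin n) : qq (E := E) n ((j : ℕ) + 1) = biproduct.π (fun _ : Fin n => E) j := by
  have hj : (⟨(j : ℕ) + 1 - 1, by omega⟩ : Fin n) = j := by ext; simp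
  rw [qq, dif_pos (show 1 ≤ (j : ℕ) + 1 ∧ (j : ℕ) + 1 ≤ n by omega), hj]

lemma qq_zero : qq (E := E) n 0 = 0 := by simp [qq]

lemma qq_last : qq (E := E) n (n + 1) = 0 := by rw [qq, dif_neg (by omega)]

lemma sum_Gmap_comp : Gmap f n ≫ βmap f n =
    ∑ j : Fin n, biproduct.π (fun _ : Fin n => E) j ≫ f ≫ mappingCone.inr f ≫
      biproduct.ι (fun _ : Fin n => mappingCone f) j ≫ biprod.inr := by
  rw [Gmap, βmap, biproduct.lift_desc]
  apply biprod.hom_ext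
  · simp only [Preadditive.sum_comp, Category.assoc, biprod.lift_fst, Category.comp_id,
      biprod.inr_fst, comp_zero, Finset.sum_const_zero]
    have h : (∑ x : Fin (n + 1), (qq (E := E) n ((x : ℕ) + 1) ≫ f - qq n (x : ℕ) ≫ f))
        = qq n (n + 1) ≫ f - qq n 0 ≫ f := tele_sum (fun i => qq (E := E) n i ≫ f) (n + 1)
    rw [h, qq_zero, qq_last]
    simp
  · simp only [Preadditive.sum_comp, Category.assoc, biprod.lift_snd, biprod.inr_snd]
    simp only [sθ, Preadditive.comp_sum]
    rw [Finset.sum_comm]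
    apply Finset.sum_congr rfl
    intro j _
    have h1 : ∀ i : Fin (n + 1),
        (qq n ((i : ℕ) + 1) ≫ f - qq n (i : ℕ) ≫ f) ≫
          (if (i : ℕ) ≤ (j : ℕ) then mappingCone.inr f ≫
            biproduct.ι (fun _ : Fin n => mappingCone f) j else 0) =
        (if (i : ℕ) ≤ (j : ℕ) then
          (qq n ((i : ℕ) + 1) ≫ f - qq n (i : ℕ) ≫ f) else 0) ≫
          (mappingCone.inr f ≫ biproduct.ι (fun _ : Fin n => mappingCone f) j) := by
      intro i
      split_ifs <;> simp
    simp only [h1, ← Preadditive.sum_comp]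
    have h2 : (∑ i : Fin (n + 1), if (i : ℕ) ≤ (j : ℕ) then
          (qq (E := E) n ((i : ℕ) + 1) ≫ f - qq n (i : ℕ) ≫ f) else 0)
        = qq n ((j : ℕ) + 1) ≫ f - qq n 0 ≫ f :=
      tele_sum_le (fun i => qq (E := E) n i ≫ f) (n + 1) (j : ℕ) (by omega)
    rw [h2, qq_zero, qq_succ]
    simp

lemma hδα : δ (-1) 0 (αc f n) = Cochain.ofHom (Gmap f n ≫ βmap f n) := by
  rw [sum_Gmap_comp, cochain_ofHom_sum, αc, delta_sum]
  apply Finset.sum_congr rfl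
  intro j _
  rw [δ_ofHom_comp, δ_comp_ofHom, mappingCone.δ_inl]
  simp only [← Cochain.ofHom_comp, Category.assoc]

/-- the morphism `mappingCone (Gmap f n) ⟶ F ⊞ ⨁ (mappingCone f)` -/
noncomputable def Φ : mappingCone (Gmap f n) ⟶ F ⊞ ⨁ fun _ : Fin n => mappingCone f :=
  mappingCone.desc (Gmap f n) (αc f n) (βmap f n) (hδα f n)

lemma ι_qq (j : Fin n) (k : ℕ) :
    biproduct.ι (fun _ : Fin n => E) j ≫ qq n k = if k = (j : ℕ) + 1 then 𝟙 E else 0 := by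
  rw [qq]
  by_cases h : 1 ≤ k ∧ k ≤ n
  · rw [dif_pos h, bi_ι_π]
    by_cases hk : k = (j : ℕ) + 1
    · rw [if_pos hk, if_pos (by ext; simp; omega)]
    · rw [if_neg hk, if_neg (by
        intro he
        apply hk
        have := congrArg Fin.val he
        simp at this
        omega)]
  · rw [dif_neg h, comp_zero,
      if_neg (by intro hk; exact h ⟨by omega, by have := j.isLt; omega⟩)]

lemma ι_qq_assoc (j : Fin n) (k : ℕ) {T : CochainComplex (ModuleCat R) ℤ} (h : E ⟶ T) :
    biproduct.ι (fun _ : Fin n => E) j ≫ qq n k ≫ h = if k = (j : ℕ) + 1 then h else 0 := by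
  rw [← Category.assoc, ι_qq]
  split_ifs <;> simp

lemma ιB_π (k : ℕ) (i : Fin (n + 1)) :
    ιB n k ≫ biproduct.π (fun _ : Fin (n + 1) => F) i = if k = (i : ℕ) then 𝟙 F else 0 := by
  rw [ιB]
  by_cases h : k ≤ n
  · rw [dif_pos h, bi_ι_π]
    by_cases hk : k = (i : ℕ)
    · rw [if_pos hk, if_pos (by ext; simp [hk])]
    · rw [if_neg hk, if_neg (fun he => hk (by simpa using congrArg Fin.val he))]
  · rw [dif_neg h, Limits.zero_comp, if_neg (by intro hk; exact h (by have := i.isLt; omega))]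

lemma K1 (j : Fin n) : biproduct.ι (fun _ : Fin n => E) j ≫ Gmap f n =
    f ≫ (ιB n (j : ℕ) - ιB n ((j : ℕ) + 1)) := by
  apply biproduct.hom_ext
  intro i
  simp only [Gmap, biproduct.lift_π, Category.assoc, Preadditive.comp_sub,
    Preadditive.sub_comp, ι_qq_assoc, ιB_π]
  split_ifs <;> (try (exfalso; omega)) <;> simp

lemma K1c (j : Fin n) :
    δ (-1) 0 ((Cochain.ofHom (biproduct.ι (fun _ : Fin n => E) j)).comp
        (mappingCone.inl (Gmap f n)) (zero_add (-1))) =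
      Cochain.ofHom (f ≫ (ιB n (j : ℕ) - ιB n ((j : ℕ) + 1)) ≫
        mappingCone.inr (Gmap f n)) := by
  rw [δ_ofHom_comp, mappingCone.δ_inl, ← Cochain.ofHom_comp, ← Category.assoc, K1 f n j,
    Category.assoc]

noncomputable def ψj (j : Fin n) : mappingCone f ⟶ mappingCone (Gmap f n) :=
  mappingCone.desc f
    ((Cochain.ofHom (biproduct.ι (fun _ : Fin n => E) j)).comp
      (mappingCone.inl (Gmap f n)) (zero_add (-1)))
    ((ιB n (j : ℕ) - ιB n ((j : ℕ) + 1)) ≫ mappingCone.inr (Gmap f n)) (K1c f n j)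

noncomputable def Ψ : (F ⊞ ⨁ fun _ : Fin n => mappingCone f) ⟶ mappingCone (Gmap f n) :=
  biprod.desc (ιB n n ≫ mappingCone.inr (Gmap f n)) (biproduct.desc (ψj f n))

lemma hom_sum_f {K L : CochainComplex (ModuleCat R) ℤ} {ι : Type*} (s : Finset ι)
    (φ : ι → (K ⟶ L)) (p : ℤ) :
    (∑ i ∈ s, φ i).f p = ∑ i ∈ s, (φ i).f p := by
  classical
  induction s using Finset.induction with
  | empty => rfl
  | insert _ _ h ih =>
      rw [Finset.sum_insert h, Finset.sum_insert h, HomologicalComplex.add_f_apply, ih]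

lemma bi_ι_π_f {J : Type} [Fintype J] [DecidableEq J] (X : CochainComplex (ModuleCat R) ℤ)
    (j k : J) (p : ℤ) :
    (biproduct.ι (fun _ : J => X) j).f p ≫ (biproduct.π (fun _ : J => X) k).f p =
      if j = k then 𝟙 (X.X p) else 0 := by
  rw [← HomologicalComplex.comp_f, bi_ι_π]
  split_ifs <;> simp

lemma bi_ι_π_f_assoc {J : Type} [Fintype J] [DecidableEq J] (X : CochainComplex (ModuleCat R) ℤ)
    (j k : J) (p : ℤ) {T : ModuleCat R} (h : X.X p ⟶ T) :
    (biproduct.ι (fun _ : J => X) j).f p ≫ (biproduct.π (fun _ : J => X) k).f p ≫ h =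
      if j = k then h else 0 := by
  rw [← Category.assoc, bi_ι_π_f]
  split_ifs <;> simp

lemma ιB_coe (i : Fin (n + 1)) : ιB (F := F) n (i : ℕ) = biproduct.ι (fun _ : Fin (n + 1) => F) i := by
  rw [ιB, dif_pos (by omega)]

lemma ιB_βmap (k : ℕ) (hk : k ≤ n) :
    ιB n k ≫ βmap f n = biprod.lift (𝟙 F) (sθ f n k) := by
  rw [ιB, dif_pos hk, βmap, biproduct.ι_desc]

lemma sθ_n : sθ f n n = 0 := by
  rw [sθ]
  apply Finset.sum_eq_zero
  intro j _
  rw [if_neg (by have := j.isLt; omega)]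

lemma sθ_sub (j : Fin n) :
    sθ f n (j : ℕ) - sθ f n ((j : ℕ) + 1) =
      mappingCone.inr f ≫ biproduct.ι (fun _ : Fin n => mappingCone f) j := by
  rw [sθ, sθ, ← Finset.sum_sub_distrib]
  have hterm : ∀ j' : Fin n,
      ((if (j : ℕ) ≤ (j' : ℕ) then mappingCone.inr f ≫
          biproduct.ι (fun _ : Fin n => mappingCone f) j' else 0) -
        (if (j : ℕ) + 1 ≤ (j' : ℕ) then mappingCone.inr f ≫
          biproduct.ι (fun _ : Fin n => mappingCone f) j' else 0)) =
      if j' = j then mappingCone.inr f ≫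
          biproduct.ι (fun _ : Fin n => mappingCone f) j' else 0 := by
    intro j'
    by_cases h : j' = j
    · subst h
      rw [if_pos (le_refl _), if_neg (by omega), if_pos rfl, sub_zero]
    · have hv : (j' : ℕ) ≠ (j : ℕ) := fun hh => h (Fin.ext hh)
      rw [if_neg h]
      by_cases h2 : (j : ℕ) ≤ (j' : ℕ)
      · rw [if_pos h2, if_pos (by omega), sub_self]
      · rw [if_neg h2, if_neg (by omega), sub_self]
  rw [Finset.sum_congr rfl (fun j' _ => hterm j'), Finset.sum_ite_eq' Finset.univ j,
    if_pos (Finset.mem_univ j)]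

lemma cone_hom_ext {X Y K : CochainComplex (ModuleCat R) ℤ} (φ : X ⟶ Y)
    [HomologicalComplex.HasHomotopyCofiber φ] {σ τ : mappingCone φ ⟶ K}
    (h1 : (mappingCone.inl φ).comp (Cochain.ofHom σ) (add_zero (-1)) =
          (mappingCone.inl φ).comp (Cochain.ofHom τ) (add_zero (-1)))
    (h2 : mappingCone.inr φ ≫ σ = mappingCone.inr φ ≫ τ) : σ = τ := by
  apply HomologicalComplex.hom_ext
  intro p
  apply mappingCone.ext_from φ (p + 1) p rfl
  · have := Cochain.congr_v h1 (p + 1) p (by omega)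
    simpa only [Cochain.comp_zero_cochain_v, Cochain.ofHom_v] using this
  · have h3 : (mappingCone.inr φ ≫ σ).f p = (mappingCone.inr φ ≫ τ).f p := by rw [h2]
    simpa only [HomologicalComplex.comp_f] using h3

lemma ι_αc (j : Fin n) :
    (Cochain.ofHom (biproduct.ι (fun _ : Fin n => E) j)).comp (αc f n) (zero_add (-1)) =
      (mappingCone.inl f).comp
        (Cochain.ofHom (biproduct.ι (fun _ : Fin n => mappingCone f) j ≫ biprod.inr))
        (add_zero (-1)) := by
  refine Cochain.ext _ _ (fun p q hpq => ?_)
  simp only [αc, Cochain.zero_cochain_comp_v, Cochain.ofHom_v, cochain_sum_v,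
    Cochain.comp_zero_cochain_v, Preadditive.comp_sum]
  rw [Finset.sum_congr rfl (fun j' _ => bi_ι_π_f_assoc (R := R) E j j' p
    ((mappingCone.inl f).v p q hpq ≫
      (biproduct.ι (fun _ : Fin n => mappingCone f) j' ≫ biprod.inr).f q)),
    Finset.sum_ite_eq Finset.univ j]
  simp

lemma hΨΦ : Ψ f n ≫ Φ f n = 𝟙 (F ⊞ ⨁ fun _ : Fin n => mappingCone f) := by
  apply biprod.hom_ext'
  · rw [Ψ, Φ, biprod.inl_desc_assoc, Category.assoc, mappingCone.inr_desc,
      ιB_βmap f n n (le_refl n), sθ_n, Category.comp_id]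
    apply biprod.hom_ext <;> simp
  · rw [Ψ, biprod.inr_desc_assoc]
    apply biproduct.hom_ext'
    intro j
    rw [biproduct.ι_desc_assoc, Category.comp_id]
    apply cone_hom_ext f
    · refine Cochain.ext _ _ (fun p q hpq => ?_)
      have h₁ := Cochain.congr_v (ι_αc f n j) p q hpq
      simp only [Cochain.comp_zero_cochain_v, Cochain.ofHom_v, Cochain.zero_cochain_comp_v,
        HomologicalComplex.comp_f] at h₁ ⊢
      rw [← h₁]
      simp only [ψj, mappingCone.inl_v_desc_f_assoc, Cochain.zero_cochain_comp_v,
        Cochain.ofHom_v, Category.assoc, Φ, mappingCone.inl_v_desc_f]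
    · simp only [ψj, Φ, mappingCone.inr_desc_assoc, Category.assoc, mappingCone.inr_desc]
      rw [Preadditive.sub_comp, ιB_βmap f n _ (by omega), ιB_βmap f n _ (by omega)]
      apply biprod.hom_ext
      · simp
      · simp only [Preadditive.sub_comp, biprod.lift_snd, Category.assoc, biprod.inr_snd,
          Category.comp_id]
        exact sθ_sub f n j

lemma βΨ : βmap f n ≫ Ψ f n = mappingCone.inr (Gmap f n) := by
  apply biproduct.hom_ext'
  intro i
  rw [βmap, biproduct.ι_desc_assoc, Ψ, biprod.lift_desc, Category.id_comp]
  have hterm : ∀ j : Fin n,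
      (if (i : ℕ) ≤ (j : ℕ) then mappingCone.inr f ≫
          biproduct.ι (fun _ : Fin n => mappingCone f) j else 0) ≫
        biproduct.desc (ψj f n) =
      (if (i : ℕ) ≤ (j : ℕ) then ιB n (j : ℕ) - ιB n ((j : ℕ) + 1) else 0) ≫
        mappingCone.inr (Gmap f n) := by
    intro j
    split_ifs
    · rw [Category.assoc, biproduct.ι_desc, ψj, mappingCone.inr_desc]
    · rw [Limits.zero_comp, Limits.zero_comp]
  rw [sθ, Preadditive.sum_comp, Finset.sum_congr rfl (fun j _ => hterm j),
    ← Preadditive.sum_comp]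
  have htele : (∑ j : Fin n, if (i : ℕ) ≤ (j : ℕ) then ιB (F := F) n (j : ℕ) -
      ιB n ((j : ℕ) + 1) else 0) = ιB n (i : ℕ) - ιB n n :=
    tele_sum_ge (fun k => ιB (F := F) n k) n (i : ℕ) (by omega)
  rw [htele, ιB_coe, Preadditive.sub_comp]
  abel

lemma αcΨ : (αc f n).comp (Cochain.ofHom (Ψ f n)) (add_zero (-1)) =
    mappingCone.inl (Gmap f n) := by
  refine Cochain.ext _ _ (fun p q hpq => ?_)
  have hι : ∀ j : Fin n,
      (biproduct.ι (fun _ : Fin n => mappingCone f) j ≫ biprod.inr) ≫ Ψ f n = ψj f n j := by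
    intro j
    rw [Category.assoc, Ψ, biprod.inr_desc, biproduct.ι_desc]
  simp only [Cochain.comp_zero_cochain_v, Cochain.ofHom_v, αc, cochain_sum_v,
    Preadditive.sum_comp, Cochain.zero_cochain_comp_v, Category.assoc]
  have hterm : ∀ j : Fin n,
      (biproduct.π (fun _ : Fin n => E) j).f p ≫ (mappingCone.inl f).v p q hpq ≫
        (biproduct.ι (fun _ : Fin n => mappingCone f) j ≫ biprod.inr).f q ≫ (Ψ f n).f q =
      (biproduct.π (fun _ : Fin n => E) j).f p ≫ (biproduct.ι (fun _ : Fin n => E) j).f p ≫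
        (mappingCone.inl (Gmap f n)).v p q hpq := by
    intro j
    rw [show ((biproduct.ι (fun _ : Fin n => mappingCone f) j ≫ biprod.inr).f q ≫
        (Ψ f n).f q) = (ψj f n j).f q from by rw [← HomologicalComplex.comp_f, hι j]]
    simp only [ψj, mappingCone.inl_v_desc_f, Cochain.zero_cochain_comp_v, Cochain.ofHom_v,
      Category.assoc]
  rw [Finset.sum_congr rfl (fun j _ => hterm j)]
  simp only [← Category.assoc]
  rw [← Preadditive.sum_comp]
  have htot : (∑ j : Fin n, (biproduct.π (fun _ : Fin n => E) j).f p ≫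
      (biproduct.ι (fun _ : Fin n => E) j).f p) = 𝟙 _ := by
    have h0 := biproduct.total (f := fun _ : Fin n => E)
    have h1 := congrArg (fun s : (⨁ fun _ : Fin n => E) ⟶ (⨁ fun _ : Fin n => E) =>
      HomologicalComplex.Hom.f s p) h0
    simp only [hom_sum_f, HomologicalComplex.comp_f, HomologicalComplex.id_f] at h1
    exact h1
  rw [htot, Category.id_comp]

lemma hΦΨ : Φ f n ≫ Ψ f n = 𝟙 (mappingCone (Gmap f n)) := by
  apply cone_hom_ext (Gmap f n)
  · refine Cochain.ext _ _ (fun p q hpq => ?_)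
    have h₁ := Cochain.congr_v (αcΨ f n) p q hpq
    simp only [Cochain.comp_zero_cochain_v, Cochain.ofHom_v] at h₁
    simp only [Cochain.comp_zero_cochain_v, Cochain.ofHom_v, HomologicalComplex.comp_f,
      HomologicalComplex.id_f, Category.comp_id]
    rw [← Category.assoc]
    simp only [Φ, mappingCone.inl_v_desc_f]
    exact h₁
  · simp only [Φ, mappingCone.inr_desc_assoc, βΨ, Category.comp_id]

/-- The chain-level isomorphism between the mapping cone of `Gmap f n` and
`F ⊞ ⨁ (mappingCone f)`. -/
noncomputable def coneIso :
    mappingCone (Gmap f n) ≅ F ⊞ ⨁ fun _ : Fin n => mappingCone f where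
  hom := Φ f n
  inv := Ψ f n
  hom_inv_id := hΦΨ f n
  inv_hom_id := hΨΦ f n

end Defs

/-- For a morphism `f : E ⟶ F` of `ℤ`-indexed cochain complexes of `R`-modules and `n : ℕ`,
let `g : E^{⊕n} ⟶ F^{⊕(n+1)}` be the chain map whose `j`-th component (`0 ≤ j ≤ n`) is
`f (x_{j+1}) - f (x_j)` with the convention `x₀ = x_{n+1} = 0` (here `P i` is the
extension-by-zero projection onto the `i`-th summand in the `1`-based indexing).  Then the
mapping cone of `g` is isomorphic, in the homotopy category of cochain complexes of
`R`-modules, to `F ⊞ Cone(f)^{⊕n}`. -/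
theorem mappingCone_cech_conerve_iso (R : Type*) [CommRing R]
    {E F : CochainComplex (ModuleCat R) ℤ} (f : E ⟶ F) (n : ℕ)
    (P : ℕ → ((⨁ fun _ : Fin n => E) ⟶ E))
    (hP : ∀ i : ℕ, P i = if h : 1 ≤ i ∧ i ≤ n
      then biproduct.π (fun _ : Fin n => E) (⟨i - 1, by omega⟩ : Fin n) else 0)
    (g : (⨁ fun _ : Fin n => E) ⟶ (⨁ fun _ : Fin (n + 1) => F))
    (hg : g = biproduct.lift fun j : Fin (n + 1) =>
      P ((j : ℕ) + 1) ≫ f - P (j : ℕ) ≫ f) :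
    Nonempty
      ((HomotopyCategory.quotient (ModuleCat R) (ComplexShape.up ℤ)).obj
          (CochainComplex.mappingCone g) ≅
        (HomotopyCategory.quotient (ModuleCat R) (ComplexShape.up ℤ)).obj
          (F ⊞ ⨁ fun _ : Fin n => CochainComplex.mappingCone f)) := by
  have hq : ∀ i, P i = qq (E := E) n i := fun i => by rw [hP i]; rfl
  have hg' : g = Gmap f n := by
    rw [hg]
    simp only [hq]
    rfl
  subst hg'
  exact ⟨(HomotopyCategory.quotient (ModuleCat R) (ComplexShape.up ℤ)).mapIso (coneIso f n)⟩
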